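/- Let E be a real vector space, K ≥ 2 an integer, λ ∈ (0, 1], and w*_1, …, w*_K ∈ E. Then there exists a unique tuple (w_{p,1}, …, w_{p,K}) ∈ E^K satisfying w_{p,k} = λ·w*_k + ((1−λ)/(K−1))·Σ_{k'≠k} w_{p,k'} for every k ∈ {1,…,K}, and it is given explicitly by w_{p,k} = (λ(K−1)·w*_k + (1−λ)·Σ_{k'=1}^K w*_{k'}) / (K − λ). -/

import Mathlib

/-- For `λ ∈ (0,1]` the SoftPull fixed-point system
`w_{p,k} = λ·w*_k + ((1−λ)/(K−1))·Σ_{k'≠k} w_{p,k'}` has a unique solution, explicitly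
`w_{p,k} = (λ(K−1)·w*_k + (1−λ)·Σ_{k'} w*_{k'}) / (K − λ)`. -/
theorem stmt_18 {E : Type*} [AddCommGroup E] [Module ℝ E]
    (K : ℕ) (hK : 2 ≤ K) (lam : ℝ) (hlam0 : 0 < lam) (hlam1 : lam ≤ 1)
    (wstar : Fin K → E) :
    (∃! wp : Fin K → E, ∀ k, wp k = lam • wstar k +
      ((1 - lam) / ((K : ℝ) - 1)) • ∑ k' ∈ Finset.univ.erase k, wp k') ∧
    ∀ wp : Fin K → E,
      (∀ k, wp k = lam • wstar k +
        ((1 - lam) / ((K : ℝ) - 1)) • ∑ k' ∈ Finset.univ.erase k, wp k') →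
      ∀ k, wp k = ((K : ℝ) - lam)⁻¹ •
        ((lam * ((K : ℝ) - 1)) • wstar k + (1 - lam) • ∑ k', wstar k') := by
  have hc2 : (2:ℝ) ≤ (K:ℝ) := by exact_mod_cast hK
  have hc1 : (K : ℝ) - 1 ≠ 0 := by nlinarith
  have hcl : (K : ℝ) - lam ≠ 0 := by nlinarith
  have hlam : lam ≠ 0 := ne_of_gt hlam0
  set S : E := ∑ k', wstar k' with hS
  set d : ℝ := (1 - lam) / ((K : ℝ) - 1) with hd
  have hd0 : 0 ≤ d := div_nonneg (by linarith) (by nlinarith)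
  have h1d : (1 : ℝ) + d ≠ 0 := by positivity
  -- uniqueness characterization
  have key : ∀ wp : Fin K → E,
      (∀ k, wp k = lam • wstar k + d • ∑ k' ∈ Finset.univ.erase k, wp k') →
      ∀ k, wp k = ((K : ℝ) - lam)⁻¹ •
        ((lam * ((K : ℝ) - 1)) • wstar k + (1 - lam) • S) := by
    intro wp hwp
    set T : E := ∑ k', wp k' with hT
    have hwp' : ∀ k, wp k = lam • wstar k + d • (T - wp k) := by
      intro k
      rw [hT, ← Finset.sum_erase_eq_sub (Finset.mem_univ k)]
      exact hwp k
    have h1 : T = lam • S + (1 - lam) • T := by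
      have hsum : T = lam • S + d • ((K : ℝ) • T - T) := by
        calc T = ∑ k, wp k := rfl
        _ = ∑ k, (lam • wstar k + d • (T - wp k)) :=
              Finset.sum_congr rfl fun k _ => hwp' k
        _ = lam • S + d • ((K : ℝ) • T - T) := by
              rw [Finset.sum_add_distrib, ← Finset.smul_sum, ← Finset.smul_sum,
                Finset.sum_sub_distrib, Finset.sum_const, Finset.card_univ,
                Fintype.card_fin, ← hT, ← hS, Nat.cast_smul_eq_nsmul ℝ]
      have hrw : d • ((K : ℝ) • T - T) = (1 - lam) • T := by
        have : (K : ℝ) • T - T = ((K : ℝ) - 1) • T := by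
          rw [sub_smul, one_smul]
        rw [this, smul_smul, hd, div_mul_cancel₀ _ hc1]
      rw [hrw] at hsum
      exact hsum
    have hTS : T = S := by
      have h2 : lam • T = lam • S := by
        have h3 : ((1:ℝ) - (1 - lam)) • T = lam • S := by
          rw [sub_smul, one_smul]
          nth_rewrite 1 [h1]
          abel
        have e : (1:ℝ) - (1 - lam) = lam := by ring
        rwa [e] at h3
      have := congrArg (fun x => lam⁻¹ • x) h2
      simpa [inv_smul_smul₀ hlam] using this
    intro k
    have h3 : wp k + d • wp k = lam • wstar k + d • S := by
      have h := hwp' k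
      rw [hTS, smul_sub] at h
      nth_rewrite 1 [h]
      abel
    have h3' : ((1:ℝ) + d) • wp k = lam • wstar k + d • S := by
      rw [add_smul, one_smul]; exact h3
    have h4 : wp k = ((1:ℝ) + d)⁻¹ • (lam • wstar k + d • S) := by
      have := congrArg (fun x => ((1:ℝ) + d)⁻¹ • x) h3'
      simpa [inv_smul_smul₀ h1d] using this
    rw [h4]
    match_scalars
    · rw [hd]
      field_simp
      rw [show (K:ℝ) - 1 + (1 - lam) = K - lam by ring]
      field_simp
    · rw [hd]
      field_simp
      rw [show (K:ℝ) - 1 + (1 - lam) = K - lam by ring]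
      field_simp
  -- the explicit solution
  set w : Fin K → E := fun k => ((K : ℝ) - lam)⁻¹ •
      ((lam * ((K : ℝ) - 1)) • wstar k + (1 - lam) • S) with hw
  have hWsum : ∑ k', w k' = ((K : ℝ) - lam)⁻¹ •
      ((lam * ((K : ℝ) - 1)) • S + ((K : ℝ) * (1 - lam)) • S) := by
    rw [hw]
    rw [← Finset.smul_sum, Finset.sum_add_distrib, ← Finset.smul_sum, ← hS,
      Finset.sum_const, Finset.card_univ, Fintype.card_fin,
      ← Nat.cast_smul_eq_nsmul ℝ, smul_smul]
  have hwsol : ∀ k, w k = lam • wstar k + d • ∑ k' ∈ Finset.univ.erase k, w k' := by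
    intro k
    rw [Finset.sum_erase_eq_sub (Finset.mem_univ k), hWsum]
    rw [hw]
    match_scalars
    · rw [hd]
      field_simp
      ring
    · rw [hd]
      field_simp
      ring
  refine ⟨⟨w, hwsol, fun y hy => funext fun k => by rw [key y hy k, hw]⟩, key⟩
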